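/- In any protocol solving uniform consensus in the crash-failure model with t < n, K_i(∃correct(v)) — process i knowing that some correct process knows ∃v — is a necessary condition for process i deciding v. -/
import Mathlib


attribute [local instance] Classical.propDecidable

/-- An adversary in the synchronous crash-failure model: an input vector of binary
initial values, a failure pattern given by the delivery relation `F` (`F m j i` means
the message sent by `j` at time `m` is delivered to `i` at time `m+1`, i.e. in round `m+1`),
and a crash round for each process (`⊤` meaning the process never crashes).
A process behaves correctly before its crashing round and sends nothing afterwards;
during its crashing round it may send to an arbitrary subset. -/
structure Adversary (n : ℕ) where
  init : Fin n → Bool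
  F : ℕ → Fin n → Fin n → Prop
  crash : Fin n → ℕ∞
  crash_pos : ∀ j, 1 ≤ crash j
  before_crash : ∀ (m : ℕ) (j i : Fin n), ((m + 1 : ℕ) : ℕ∞) < crash j → F m j i
  after_crash : ∀ (m : ℕ) (j i : Fin n), crash j < ((m + 1 : ℕ) : ℕ∞) → ¬ F m j i

namespace Adversary

variable {n : ℕ}

/-- A process is faulty if it crashes at some point. -/
def Faulty (A : Adversary n) (j : Fin n) : Prop := A.crash j ≠ ⊤

/-- The number `f` of actual failures in the run determined by the adversary. -/
noncomputable def numFaults (A : Adversary n) : ℕ := {j | A.Faulty j}.ncard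

/-- A process is active at time `m` if it has not crashed before time `m`. -/
def Active (A : Adversary n) (j : Fin n) (m : ℕ) : Prop := ((m : ℕ) : ℕ∞) < A.crash j

end Adversary

/-- `Seen A ⟨j,ℓ⟩ ⟨i,m⟩`: node `⟨j,ℓ⟩` is in the view (communication graph) of node
`⟨i,m⟩`, i.e. there is a message chain from `⟨j,ℓ⟩` to `⟨i,m⟩`. -/
inductive Seen {n : ℕ} (A : Adversary n) : Fin n × ℕ → Fin n × ℕ → Prop
  | refl (p : Fin n × ℕ) : Seen A p p
  | self {p : Fin n × ℕ} {i : Fin n} {m : ℕ} : Seen A p (i, m) → Seen A p (i, m + 1)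
  | step {p : Fin n × ℕ} {j i : Fin n} {m : ℕ} : Seen A p (j, m) → A.F m j i →
      Seen A p (i, m + 1)

open Adversary

/-- Two adversaries give process `i` the same view at time `m` in a full-information
protocol: the same nodes are seen, with the same initial values at seen time-0 nodes
and the same incoming edges at seen later nodes. -/
def sameView {n : ℕ} (A B : Adversary n) (i : Fin n) (m : ℕ) : Prop :=
  (∀ p, Seen A p (i, m) ↔ Seen B p (i, m)) ∧
  (∀ j, Seen A (j, 0) (i, m) → A.init j = B.init j) ∧
  (∀ (k : ℕ) (j j' : Fin n), Seen A (j', k + 1) (i, m) → (A.F k j j' ↔ B.F k j j'))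

/-- The local state of (active) process `i` at time `m` is the same under both
adversaries: `i` is active in both and has the same full-information view. -/
def sameLocal {n : ℕ} (A B : Adversary n) (i : Fin n) (m : ℕ) : Prop :=
  A.Active i m ∧ B.Active i m ∧ sameView A B i m

/-- The runs of the system are those generated by adversaries with at most `t` crashes. -/
def Valid {n : ℕ} (t : ℕ) (A : Adversary n) : Prop := A.numFaults ≤ t

/-- Knowledge in the full-information protocol: `i` knows the fact `φ` at time `m`
iff `φ` holds at time `m` in every run (with at most `t` failures) in which `i` has
the same local state. -/
def Knows {n : ℕ} (t : ℕ) (φ : Adversary n → ℕ → Prop) (A : Adversary n) (i : Fin n)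
    (m : ℕ) : Prop :=
  ∀ B : Adversary n, Valid t B → sameLocal A B i m → φ B m

/-- The fact `∃v`: some process has initial value `v`. -/
def existsVal {n : ℕ} (v : Bool) : Adversary n → ℕ → Prop := fun A _ => ∃ j, A.init j = v

/-- Node `⟨j',m'⟩` is revealed to `⟨i,m⟩`: either it is seen by `⟨i,m⟩`, or for some
seen node `⟨i',m'⟩` the edge `(⟨j',m'-1⟩,⟨i',m'⟩)` is absent from `i`'s view
(proving that `j'` crashed before time `m'`). -/
def RevealedNode {n : ℕ} (A : Adversary n) (j' : Fin n) (m' : ℕ) (i : Fin n) (m : ℕ) :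
    Prop :=
  Seen A (j', m') (i, m) ∨
  ∃ (i' : Fin n) (k : ℕ), m' = k + 1 ∧ Seen A (i', k + 1) (i, m) ∧ ¬ A.F k j' i'

/-- Time `k` is revealed to `⟨i,m⟩` if every node `⟨j',k⟩` is revealed to `⟨i,m⟩`. -/
def RevealedTime {n : ℕ} (A : Adversary n) (k : ℕ) (i : Fin n) (m : ℕ) : Prop :=
  ∀ j', RevealedNode A j' k i m

/-- A hidden path w.r.t. `⟨i,m⟩`: for each `k ≤ m` a node `⟨j_k,k⟩` not revealed to `⟨i,m⟩`. -/
def HiddenPath {n : ℕ} (A : Adversary n) (i : Fin n) (m : ℕ) : Prop :=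
  ∃ js : ℕ → Fin n, ∀ k ≤ m, ¬ RevealedNode A (js k) k i m

/-- `not-known(∃0)`: no process active at time `m` knows `∃0`. -/
def notKnown0 {n : ℕ} (t : ℕ) : Adversary n → ℕ → Prop :=
  fun A m => ∀ j, A.Active j m → ¬ Knows t (existsVal false) A j m

/-- A (full-information, deterministic) decision protocol, described by the decision
status function: `P A i m = some v` iff by time `m` process `i` has decided `v`
in the run determined by adversary `A`. -/
abbrev ProtoDec (n : ℕ) : Type := Adversary n → Fin n → ℕ → Option Bool

/-- Sanity conditions making a decision-status function a protocol: decisions are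
irrevocable, and (for active processes) depend only on the local state. -/
def IsProtocol {n : ℕ} (t : ℕ) (P : ProtoDec n) : Prop :=
  (∀ A i m v, P A i m = some v → P A i (m + 1) = some v) ∧
  (∀ A B i m, Valid t A → Valid t B → sameLocal A B i m → P A i m = P B i m)

/-- Process `i` performs the action `decide(v)` at time `m`: it is decided on `v`
at `m` and was undecided before. -/
def DecidesAt {n : ℕ} (P : ProtoDec n) (A : Adversary n) (i : Fin n) (m : ℕ) (v : Bool) :
    Prop :=
  P A i m = some v ∧ ∀ k < m, P A i k = none

/-- Decision: every correct process eventually decides. -/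
def Decision {n : ℕ} (t : ℕ) (P : ProtoDec n) : Prop :=
  ∀ A : Adversary n, Valid t A → ∀ i, ¬ A.Faulty i → ∃ m, P A i m ≠ none

/-- Validity: if all initial values are `v` then correct processes decide `v`. -/
def Validity {n : ℕ} (t : ℕ) (P : ProtoDec n) : Prop :=
  ∀ A : Adversary n, Valid t A → ∀ v : Bool, (∀ j, A.init j = v) →
    ∀ i m w, ¬ A.Faulty i → P A i m = some w → w = v

/-- Agreement: all correct processes decide on the same value. -/
def Agreement {n : ℕ} (t : ℕ) (P : ProtoDec n) : Prop :=
  ∀ A : Adversary n, Valid t A → ∀ i j m m' v w, ¬ A.Faulty i → ¬ A.Faulty j →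
    P A i m = some v → P A j m' = some w → v = w

def ConsensusSolves {n : ℕ} (t : ℕ) (P : ProtoDec n) : Prop :=
  Decision t P ∧ Validity t P ∧ Agreement t P

/-- Uniform Agreement: all processes that decide (faulty or not) decide the same value. -/
def UniformAgreement {n : ℕ} (t : ℕ) (P : ProtoDec n) : Prop :=
  ∀ A : Adversary n, Valid t A → ∀ i j m m' v w,
    P A i m = some v → P A j m' = some w → v = w

def UniformConsensusSolves {n : ℕ} (t : ℕ) (P : ProtoDec n) : Prop :=
  Decision t P ∧ Validity t P ∧ UniformAgreement t P

/-- `Q` dominates `P`: for every adversary and process, if `i` has decided by time `m`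
in `P` then `i` has decided by time `m` in `Q`. -/
def Dominates {n : ℕ} (t : ℕ) (Q P : ProtoDec n) : Prop :=
  ∀ A : Adversary n, Valid t A → ∀ i m, P A i m ≠ none → Q A i m ≠ none

def StrictlyDominates {n : ℕ} (t : ℕ) (Q P : ProtoDec n) : Prop :=
  Dominates t Q P ∧ ¬ Dominates t P Q

/-- Turn a per-time decision rule into a decision-status function (the first decision
taken is kept forever). -/
def runDec (step : ℕ → Option Bool) : ℕ → Option Bool
  | 0 => step 0
  | m + 1 => (runDec step m).elim (step (m + 1)) some

/-- The protocol `P₀`: decide 0 as soon as `K_i ∃0` holds, otherwise decide 1 at time `t+1`. -/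
noncomputable def P0 (n t : ℕ) : ProtoDec n := fun A i =>
  runDec fun m =>
    if Knows t (existsVal false) A i m then some false
    else if m = t + 1 then some true
    else none

/-- The unbeatable protocol `Opt₀`: decide 0 as soon as `K_i ∃0` holds, and decide 1
as soon as `K_i not-known(∃0)` holds. -/
noncomputable def Opt0 (n t : ℕ) : ProtoDec n := fun A i =>
  runDec fun m =>
    if Knows t (existsVal false) A i m then some false
    else if Knows t (notKnown0 t) A i m then some true
    else none

/-- The number of processes with initial value `false` (0). -/
noncomputable def zeros {n : ℕ} (A : Adversary n) : ℕ :=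
  (Finset.univ.filter fun j => A.init j = false).card

/-- The number of processes with initial value `true` (1). -/
noncomputable def ones {n : ℕ} (A : Adversary n) : ℕ :=
  (Finset.univ.filter fun j => A.init j = true).card

/-- The fact `Maj = 0`: at least `n/2` initial values are 0. -/
def Maj0 (n : ℕ) : Adversary n → ℕ → Prop := fun A _ => n ≤ 2 * zeros A

/-- The fact `Maj = 1`: strictly more than `n/2` initial values are 1. -/
def Maj1 (n : ℕ) : Adversary n → ℕ → Prop := fun A _ => n < 2 * ones A

noncomputable def seenZeros {n : ℕ} (A : Adversary n) (i : Fin n) (m : ℕ) : ℕ :=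
  (Finset.univ.filter fun j => Seen A (j, 0) (i, m) ∧ A.init j = false).card

noncomputable def seenOnes {n : ℕ} (A : Adversary n) (i : Fin n) (m : ℕ) : ℕ :=
  (Finset.univ.filter fun j => Seen A (j, 0) (i, m) ∧ A.init j = true).card

/-- `Maj(vals(i,m))`: 0 if at least half of the initial values known to `i` at `m`
are 0, and 1 otherwise. -/
noncomputable def MajSeen {n : ℕ} (A : Adversary n) (i : Fin n) (m : ℕ) : Bool :=
  if seenOnes A i m ≤ seenZeros A i m then false else true

/-- The unbeatable majority consensus protocol `Opt_Maj`. -/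
noncomputable def OptMaj (n t : ℕ) : ProtoDec n := fun A i =>
  runDec fun m =>
    if Knows t (Maj0 n) A i m then some false
    else if Knows t (Maj1 n) A i m then some true
    else if ∃ k ≤ m, RevealedTime A k i m then some (MajSeen A i m)
    else none

/-- The fact `∀1`: all initial values are 1. -/
def all1 (n : ℕ) : Adversary n → ℕ → Prop := fun A _ => ∀ j, A.init j = true

/-- The sender set of `i` repeats at `⟨i,m⟩`: `i` hears from the same set of processes
in rounds `m-1` and `m` (only meaningful for `m ≥ 2`). -/
def senderSetRepeats {n : ℕ} (A : Adversary n) (i : Fin n) (m : ℕ) : Prop :=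
  ∀ j, (A.F (m - 2) j i ↔ A.F (m - 1) j i)

/-- The protocol `P0_opt` of Halpern, Moses and Waarts. -/
noncomputable def P0opt (n t : ℕ) : ProtoDec n := fun A i =>
  runDec fun m =>
    if Knows t (existsVal false) A i m then some false
    else if Knows t (all1 n) A i m ∨ (2 ≤ m ∧ senderSetRepeats A i m) then some true
    else none

/-- The fact `∃correct(v)`: some correct (never-failing) process knows `∃v`. -/
def ExistsCorrectKnows {n : ℕ} (t : ℕ) (v : Bool) : Adversary n → ℕ → Prop :=
  fun A m => ∃ j, ¬ A.Faulty j ∧ Knows t (existsVal v) A j m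

/-- The number `d` of failures process `i` knows of at time `m`: the number of
processes `j ≠ i` from which `i` receives no message in round `m`. -/
noncomputable def knownFaults {n : ℕ} (A : Adversary n) (i : Fin n) : ℕ → ℕ
  | 0 => 0
  | m + 1 => (Finset.univ.filter fun j => j ≠ i ∧ ¬ A.F m j i).card

/-- The protocol `u-P₀` for uniform consensus: decide 0 as soon as
`K_i ∃correct(0)` holds, otherwise decide 1 at time `t+1`. -/
noncomputable def uP0 (n t : ℕ) : ProtoDec n := fun A i =>
  runDec fun m =>
    if Knows t (ExistsCorrectKnows t false) A i m then some false
    else if m = t + 1 then some true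
    else none

/-- The unbeatable uniform consensus protocol `u-Opt₀`. -/
noncomputable def uOpt0 (n t : ℕ) : ProtoDec n := fun A i =>
  runDec fun m =>
    if Knows t (ExistsCorrectKnows t false) A i m then some false
    else if ¬ Knows t (existsVal false) A i m ∧ ∃ k ≤ m, RevealedTime A k i m then
      some true
    else none

/-- All decisions in the run `P[A]` are taken at or before time `m`. -/
def AllDecidedBy {n : ℕ} (P : ProtoDec n) (A : Adversary n) (m : ℕ) : Prop :=
  ∀ i k, P A i k ≠ none → P A i m ≠ none

/-- `Q` last-decider dominates `P`. -/
def LDDominates {n : ℕ} (t : ℕ) (Q P : ProtoDec n) : Prop :=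
  ∀ A : Adversary n, Valid t A → ∀ m, AllDecidedBy P A m → AllDecidedBy Q A m

/-- A 0-chain for `⟨i,m⟩`: distinct processes `j₀,…,j_d = i` with `d ≤ m`, `j₀` having
initial value 0, and `j_k` receiving a message from `j_{k-1}` at time `k` (round `k`). -/
def ZeroChain {n : ℕ} (A : Adversary n) (i : Fin n) (m : ℕ) : Prop :=
  ∃ d ≤ m, ∃ js : ℕ → Fin n, js d = i ∧
    (∀ k ≤ d, ∀ l ≤ d, js k = js l → k = l) ∧
    A.init (js 0) = false ∧
    ∀ k, 1 ≤ k → k ≤ d → A.F (k - 1) (js (k - 1)) (js k)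

section Aux

variable {n : ℕ}

lemma seen_time_le {A : Adversary n} {p q : Fin n × ℕ} (h : Seen A p q) : p.2 ≤ q.2 := by
  induction h with
  | refl => exact le_refl _
  | self _ ih => exact le_trans ih (by simp)
  | step _ _ ih => exact le_trans ih (by simp)

lemma seen_lift {A : Adversary n} {p : Fin n × ℕ} {i : Fin n} {k k' : ℕ}
    (h : Seen A p (i, k)) (hk : k ≤ k') : Seen A p (i, k') := by
  induction k', hk using Nat.le_induction with
  | base => exact h
  | succ _ _ ih => exact Seen.self ih

lemma seen_congr {A B : Adversary n} {m : ℕ}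
    (hF : ∀ k (j j' : Fin n), k < m → (A.F k j j' ↔ B.F k j j')) :
    ∀ {p q : Fin n × ℕ}, Seen A p q → q.2 ≤ m → Seen B p q := by
  intro p q h
  induction h with
  | refl => exact fun _ => Seen.refl p
  | @self i k _ ih =>
      intro hq
      have hq' : k + 1 ≤ m := hq
      exact Seen.self (ih (by omega))
  | @step j i k _ hf ih =>
      intro hq
      have hk : k + 1 ≤ m := hq
      exact Seen.step (ih (by omega)) ((hF k j i (by omega)).1 hf)

lemma sameView_trans {A B C : Adversary n} {i : Fin n} {m : ℕ}
    (h1 : sameView A B i m) (h2 : sameView B C i m) : sameView A C i m := by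
  refine ⟨fun p => (h1.1 p).trans (h2.1 p),
    fun j hj => (h1.2.1 j hj).trans (h2.2.1 j ((h1.1 _).1 hj)),
    fun k j j' hj => (h1.2.2 k j j' hj).trans (h2.2.2 k j j' ((h1.1 _).1 hj))⟩

end Aux

/-- In any protocol solving uniform consensus, `K_i ∃correct(v)` is a necessary
condition for process `i` deciding `v`. -/
theorem uniform_necessary_condition (n t : ℕ) (ht : t < n)
    (P : ProtoDec n) (hP : IsProtocol t P) (hU : UniformConsensusSolves t P) :
    ∀ A : Adversary n, Valid t A → ∀ (i : Fin n) (m : ℕ) (v : Bool),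
      A.Active i m → DecidesAt P A i m v →
      Knows t (ExistsCorrectKnows t v) A i m := by
  intro A hA i m v hAct hDec
  intro B hB hloc
  by_contra hnc
  set K : Fin n → Prop := fun j => Knows t (existsVal v) B j m with hKdef
  have hKF : ∀ j, K j → B.Faulty j := by
    intro j hj
    by_contra hc
    exact hnc ⟨j, hc, hj⟩
  have hseen_self : ∀ (D : Adversary n) (j : Fin n) (k : ℕ), Seen D (j, 0) (j, k) :=
    fun D j k => seen_lift (Seen.refl _) (Nat.zero_le k)
  have hInitK : ∀ j, B.init j = v → K j := by
    intro j hj C' _ hl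
    exact ⟨j, by rw [← hl.2.2.2.1 j (hseen_self B j m)]; exact hj⟩
  -- construct the adversary C where all knowers crash at time m without sending
  obtain ⟨C, hCi, hCF, hCc⟩ :
      ∃ C : Adversary n, C.init = B.init ∧
        (∀ (k : ℕ) (j i' : Fin n), C.F k j i' ↔ (B.F k j i' ∧ (K j → k < m))) ∧
        (∀ j, C.crash j = if K j then min (B.crash j) ((m + 1 : ℕ) : ℕ∞)
          else B.crash j) := by
    refine ⟨⟨B.init, fun k j i' => B.F k j i' ∧ (K j → k < m),
      fun j => if K j then min (B.crash j) ((m + 1 : ℕ) : ℕ∞) else B.crash j,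
      ?_, ?_, ?_⟩, rfl, fun _ _ _ => Iff.rfl, fun _ => rfl⟩
    · intro j
      by_cases hj : K j <;> simp only [hj, if_true, if_false, le_min_iff]
      · exact ⟨B.crash_pos j, by exact_mod_cast Nat.le_add_left 1 m⟩
      · exact B.crash_pos j
    · intro k j i' h
      by_cases hj : K j <;> simp only [hj, if_true, if_false, lt_min_iff] at h
      · refine ⟨B.before_crash k j i' h.1, fun _ => ?_⟩
        have h2 : k + 1 < m + 1 := by exact_mod_cast h.2
        omega
      · exact ⟨B.before_crash k j i' h, fun hj' => absurd hj' hj⟩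
    · intro k j i' h
      by_cases hj : K j <;> simp only [hj, if_true, if_false, min_lt_iff] at h
      · rcases h with h | h
        · exact fun hc => B.after_crash k j i' h hc.1
        · have hmk : m + 1 < k + 1 := by exact_mod_cast h
          exact fun hc => absurd (hc.2 hj) (by omega)
      · exact fun hc => B.after_crash k j i' h hc.1
  -- faulty sets coincide
  have hFaulty : ∀ j, C.Faulty j ↔ B.Faulty j := by
    intro j
    by_cases hj : K j
    · constructor
      · intro _; exact hKF j hj
      · intro _
        show C.crash j ≠ ⊤
        rw [hCc j, if_pos hj]
        exact ne_top_of_le_ne_top (ENat.coe_ne_top (m+1)) (min_le_right _ _)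
    · show C.crash j ≠ ⊤ ↔ B.crash j ≠ ⊤
      rw [hCc j, if_neg hj]
  have hVC : Valid t C := by
    have : {j : Fin n | C.Faulty j} = {j : Fin n | B.Faulty j} :=
      Set.ext fun j => hFaulty j
    show C.numFaults ≤ t
    unfold Adversary.numFaults
    rw [this]
    exact hB
  -- F agrees below m
  have hFbelow : ∀ (k : ℕ) (j j' : Fin n), k < m → (B.F k j j' ↔ C.F k j j') := by
    intro k j j' hk
    rw [hCF]
    exact ⟨fun h => ⟨h, fun _ => hk⟩, fun h => h.1⟩
  -- same view of i at m in B and C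
  have hSeenBC : ∀ {p q : Fin n × ℕ}, q.2 ≤ m → (Seen B p q ↔ Seen C p q) := by
    intro p q hq
    exact ⟨fun h => seen_congr hFbelow h hq,
      fun h => seen_congr (fun k j j' hk => (hFbelow k j j' hk).symm) h hq⟩
  have hViewBC : sameView B C i m := by
    refine ⟨fun p => hSeenBC (le_refl m), fun j _ => by rw [hCi], ?_⟩
    intro k j j' hj
    have hk : k + 1 ≤ m := seen_time_le hj
    exact hFbelow k j j' (by omega)
  have hActBC : B.Active i m := hloc.2.1
  have hActC : C.Active i m := by
    show ((m : ℕ) : ℕ∞) < C.crash i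
    rw [hCc i]
    by_cases hi : K i
    · rw [if_pos hi, lt_min_iff]
      exact ⟨hActBC, by exact_mod_cast Nat.lt_succ_self m⟩
    · rw [if_neg hi]; exact hActBC
  have hlocAC : sameLocal A C i m :=
    ⟨hloc.1, hActC, sameView_trans hloc.2.2 hViewBC⟩
  -- i decides v in C as well
  have hPiC : P C i m = some v := by
    rw [← hP.2 A C i m hA hVC hlocAC]
    exact hDec.1
  -- key invariant: information about a v-valued initial value stays among knowers
  have hinv : ∀ (j₀ : Fin n), B.init j₀ = v →
      ∀ q : Fin n × ℕ, Seen C (j₀, 0) q → Seen B (j₀, 0) (q.1, min q.2 m) := by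
    intro j₀ h0 q hq
    induction hq with
    | refl => simpa using Seen.refl ((j₀ : Fin n), 0)
    | @self i' k _ ih => exact seen_lift ih (by omega)
    | @step j i' k _ hf ih =>
        have hKj : K j := by
          have hsj : Seen B (j₀, 0) (j, m) := seen_lift ih (min_le_right k m)
          intro C' _ hl
          exact ⟨j₀, by rw [← hl.2.2.2.1 j₀ hsj]; exact h0⟩
        have hf' := (hCF k j i').1 hf
        have hkm : k < m := hf'.2 hKj
        have hstep : Seen B (j₀, 0) (i', k + 1) :=
          Seen.step (by simpa [min_eq_left hkm.le] using ih) hf'.1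
        simpa [min_eq_left (by omega : k + 1 ≤ m)] using hstep
  -- there exists a correct process
  obtain ⟨jc, hjc⟩ : ∃ jc, ¬ C.Faulty jc := by
    by_contra h
    push_neg at h
    have huniv : {j : Fin n | C.Faulty j} = Set.univ := Set.eq_univ_of_forall h
    have : C.numFaults = n := by
      unfold Adversary.numFaults
      rw [huniv, Set.ncard_univ]
      simp
    have h2 : C.numFaults ≤ t := hVC
    omega
  -- the correct process jc never sees a v-valued initial value in C
  have hNoSee : ∀ (m' : ℕ) (j₀ : Fin n), Seen C (j₀, 0) (jc, m') → B.init j₀ ≠ v := by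
    intro m' j₀ hs hv
    have hsm : Seen B (j₀, 0) (jc, m) :=
      seen_lift (hinv j₀ hv _ hs) (min_le_right _ _)
    have hKjc : K jc := by
      intro C' _ hl
      exact ⟨j₀, by rw [← hl.2.2.2.1 j₀ hsm]; exact hv⟩
    exact hjc ((hFaulty jc).2 (hKF jc hKjc))
  -- construct D: same as C but all initial values are ¬v
  obtain ⟨D, hDi, hDF, hDc⟩ :
      ∃ D : Adversary n, D.init = (fun _ => !v) ∧ D.F = C.F ∧ D.crash = C.crash :=
    ⟨{ C with init := fun _ => !v }, rfl, rfl, rfl⟩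
  have hFaultyD : ∀ j, D.Faulty j ↔ C.Faulty j := by
    intro j
    show D.crash j ≠ ⊤ ↔ C.crash j ≠ ⊤
    rw [hDc]
  have hVD : Valid t D := by
    have : {j : Fin n | D.Faulty j} = {j : Fin n | C.Faulty j} :=
      Set.ext fun j => hFaultyD j
    show D.numFaults ≤ t
    unfold Adversary.numFaults
    rw [this]
    exact hVC
  have hjcD : ¬ D.Faulty jc := fun h => hjc ((hFaultyD jc).1 h)
  have hcrashT : C.crash jc = ⊤ := not_ne_iff.1 hjc
  -- jc has the same local state in C and D at all times
  have hlocCD : ∀ m₀ : ℕ, sameLocal C D jc m₀ := by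
    intro m₀
    have hActjc : ((m₀ : ℕ) : ℕ∞) < C.crash jc := by
      rw [hcrashT]
      exact WithTop.coe_lt_top m₀
    refine ⟨hActjc, by rw [show D.Active jc m₀ ↔ ((m₀ : ℕ) : ℕ∞) < D.crash jc from Iff.rfl, hDc]; exact hActjc, ?_, ?_, ?_⟩
    · intro p
      have hFCD : ∀ (k : ℕ) (j j' : Fin n), k < m₀ + 1 → (C.F k j j' ↔ D.F k j j') := by
        intro k j j' _
        rw [hDF]
      exact ⟨fun h => seen_congr hFCD h (by omega),
        fun h => seen_congr (fun k j j' hk => (hFCD k j j' hk).symm) h (by omega)⟩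
    · intro j₀ hj₀
      rw [hDi, hCi]
      have := hNoSee m₀ j₀ hj₀
      cases hb : B.init j₀ <;> cases v <;> simp_all
    · intro k j j' _
      rw [hDF]
  -- all initial values in D are ¬v, so correct processes decide ¬v
  obtain ⟨m₀, hm₀⟩ := hU.1 D hVD jc hjcD
  obtain ⟨w, hw⟩ := Option.ne_none_iff_exists'.1 hm₀
  have hwv : w = !v := hU.2.1 D hVD (!v) (fun j => by rw [hDi]) jc m₀ w hjcD hw
  have hPjcC : P C jc m₀ = some (!v) := by
    rw [hP.2 C D jc m₀ hVC hVD (hlocCD m₀), hw, hwv]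
  have : v = !v := hU.2.2 C hVC i jc m m₀ v (!v) hPiC hPjcC
  simp at this
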